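/- Let events E₁,…,E₅ have rest-frame times t_i = F₀(i) and positions w_i = (F₀(i) − F₁(π₁⁻¹(i)), F₀(i) − F₂(π₂⁻¹(i)), F₀(i) − F₃(π₃⁻¹(i))) ∈ ℝ³, where F₀, F₁, F₂, F₃ : {1,…,5} → ℝ are strictly increasing and π₁, π₂, π₃ ∈ S₅. Then the observer with velocity e_j = j-th standard basis vector (j = 1,2,3) has relativized time t_i − e_j·w_i = F_j(π_j⁻¹(i)) for event E_i, and hence sees the events in order π_j; the rest-frame observer sees them in order given by the identity. -/

import Mathlib

/-- With t_i = F₀(i) and w_i = (F₀(i) - F₁(π₁⁻¹ i), F₀(i) - F₂(π₂⁻¹ i),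
F₀(i) - F₃(π₃⁻¹ i)) for strictly increasing F₀,…,F₃, the observer with velocity
the j-th standard basis vector has relativized time F_j(π_j⁻¹ i) for event i,
hence sees the events in order π_j, while the rest frame sees the identity order. -/
theorem stmt18 (F : Fin 4 → Fin 5 → ℝ) (hF : ∀ j, StrictMono (F j))
    (π : Fin 3 → Equiv.Perm (Fin 5)) :
    let t : Fin 5 → ℝ := fun i => F 0 i
    let w : Fin 5 → Fin 3 → ℝ := fun i j => F 0 i - F j.succ ((π j)⁻¹ i)
    (∀ j : Fin 3, ∀ i : Fin 5, t i - w i j = F j.succ ((π j)⁻¹ i)) ∧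
    (∀ j : Fin 3, ∀ a b : Fin 5, a < b →
      t (π j a) - w (π j a) j < t (π j b) - w (π j b) j) ∧
    (∀ a b : Fin 5, a < b → t a < t b) := by
  intro t w
  refine ⟨fun j i => by simp [t, w], fun j a b hab => ?_, fun a b hab => hF 0 hab⟩
  simp only [t, w, sub_sub_cancel, Equiv.Perm.inv_def, Equiv.symm_apply_apply]
  exact hF j.succ hab
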